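/- For the metric space M described in the context (Example 5.2 of the paper): let j ∈ ℕ and let A be a cyclically monotonic subset of M̃ such that π(A) is disjoint from {u_1^j, u_2^j, u_3^j, v_1^j, v_2^j, v_3^j}. Then there exist u,v ∈ M with u ≠ v such that A ∪ {(u,v)} and A ∪ {(v,u)} are both cyclically monotonic. -/

import Mathlib

/-- The underlying set of the metric space of Example 5.2:
points `x_i, y_i, u_i^j, v_i^j` for `i ∈ {1,2,3}` (coded by `Fin 3`)
and `j ∈ ℕ`. -/
inductive ExPt : Type
  | x : Fin 3 → ExPt
  | y : Fin 3 → ExPt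
  | u : Fin 3 → ℕ → ExPt
  | v : Fin 3 → ℕ → ExPt
deriving DecidableEq

namespace ExPt

/-- Adjacency: precisely the pairs at distance 1, namely
`y_i ~ x_{i+1}` (cyclically), `x_i ~ u_i^j`, `u_i^j ~ v_i^j`, `v_i^j ~ y_i`. -/
def adj : ExPt → ExPt → Bool
  | .y i, .x k => k == i + 1
  | .x k, .y i => k == i + 1
  | .x i, .u k _ => i == k
  | .u k _, .x i => i == k
  | .u i j, .v k l => i == k && j == l
  | .v k l, .u i j => i == k && j == l
  | .v i _, .y k => i == k
  | .y k, .v i _ => i == k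
  | _, _ => false

lemma adj_symm (a b : ExPt) : adj a b = adj b a := by
  cases a <;> cases b <;> rfl

/-- The distance of Example 5.2: `0` on the diagonal, `1` between adjacent
points, and `2` otherwise. -/
noncomputable def exDist (a b : ExPt) : ℝ :=
  if a = b then 0 else if adj a b then 1 else 2

lemma exDist_self (a : ExPt) : exDist a a = 0 := by simp [exDist]

lemma exDist_comm (a b : ExPt) : exDist a b = exDist b a := by
  unfold exDist
  rcases eq_or_ne a b with rfl | h
  · rfl
  · rw [if_neg h, if_neg (Ne.symm h), adj_symm]

lemma one_le_exDist {a b : ExPt} (h : a ≠ b) : 1 ≤ exDist a b := by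
  unfold exDist
  rw [if_neg h]
  split <;> norm_num

lemma exDist_le_two (a b : ExPt) : exDist a b ≤ 2 := by
  unfold exDist
  split
  · norm_num
  · split <;> norm_num

lemma exDist_triangle (a b c : ExPt) : exDist a c ≤ exDist a b + exDist b c := by
  rcases eq_or_ne a b with rfl | hab
  · rw [exDist_self, zero_add]
  rcases eq_or_ne b c with rfl | hbc
  · rw [exDist_self, add_zero]
  have h1 := one_le_exDist hab
  have h2 := one_le_exDist hbc
  have h3 := exDist_le_two a c
  linarith

lemma exDist_eq_zero {a b : ExPt} (h : exDist a b = 0) : a = b := by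
  by_contra hne
  have := one_le_exDist hne
  rw [h] at this
  norm_num at this

instance : TopologicalSpace ExPt := ⊥

instance : DiscreteTopology ExPt := ⟨rfl⟩

noncomputable instance : MetricSpace ExPt :=
  MetricSpace.ofDistTopology exDist exDist_self exDist_comm exDist_triangle
    (fun s => by
      constructor
      · intro _ x hx
        refine ⟨1 / 2, by norm_num, fun y hy => ?_⟩
        have : x = y := by
          by_contra hne
          have := one_le_exDist hne
          linarith
        rwa [← this]
      · intro _
        exact isOpen_discrete s)
    (fun a b h => exDist_eq_zero h)

lemma dist_def (a b : ExPt) : dist a b = exDist a b := rfl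

end ExPt

/-- The set `M̃ = {(x,y) : x ≠ y}` as a subtype. -/
def Mt (M : Type*) : Type _ := {p : M × M // p.1 ≠ p.2}

/-- `A ⊆ M̃` is cyclically monotonic. -/
def CyclMono {M : Type*} [MetricSpace M] (A : Set (Mt M)) : Prop :=
  ∀ (n : ℕ) (p : Fin (n + 1) → Mt M), (∀ i, p i ∈ A) →
    ∑ i : Fin (n + 1), dist (p i).1.1 (p i).1.2 ≤
      ∑ i : Fin (n + 1), dist (p i).1.1 (p (i + 1)).1.2

/-- `π(A)`. -/
def piA {M : Type*} (A : Set (Mt M)) : Set M := {z | ∃ p ∈ A, p.1.1 = z ∨ p.1.2 = z}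

/-- The pair `(u,v)` as an element of `M̃`. -/
def pr {M : Type*} (u v : M) (h : u ≠ v) : Mt M := ⟨(u, v), h⟩


namespace Stmt19Aux

open Finset

/-! ### Basic distance facts for `ExPt` -/

lemma dist_le_two' (a b : ExPt) : dist a b ≤ 2 := by
  rw [ExPt.dist_def]; exact ExPt.exDist_le_two a b

lemma one_le_dist' {a b : ExPt} (h : a ≠ b) : 1 ≤ dist a b := by
  rw [ExPt.dist_def]; exact ExPt.one_le_exDist h

lemma dist_int (a b : ExPt) : ∃ k : ℤ, dist a b = (k : ℝ) := by
  rw [ExPt.dist_def]; unfold ExPt.exDist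
  split
  · exact ⟨0, by norm_num⟩
  · split
    · exact ⟨1, by norm_num⟩
    · exact ⟨2, by norm_num⟩

lemma dist_adj {a b : ExPt} (hne : a ≠ b) (h : ExPt.adj a b = true) : dist a b = 1 := by
  rw [ExPt.dist_def]; unfold ExPt.exDist; rw [if_neg hne, if_pos h]

lemma dist_nadj {a b : ExPt} (hne : a ≠ b) (h : ¬ (ExPt.adj a b = true)) : dist a b = 2 := by
  rw [ExPt.dist_def]; unfold ExPt.exDist; rw [if_neg hne, if_neg h]

lemma adj_u_iff (i : Fin 3) (j : ℕ) (c : ExPt) :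
    ExPt.adj (ExPt.u i j) c = true ↔ c = ExPt.x i ∨ c = ExPt.v i j := by
  cases c <;> simp [ExPt.adj] <;> aesop

lemma adj_v_iff (i : Fin 3) (j : ℕ) (c : ExPt) :
    ExPt.adj (ExPt.v i j) c = true ↔ c = ExPt.y i ∨ c = ExPt.u i j := by
  cases c <;> simp [ExPt.adj] <;> aesop

lemma dist_yx (i k : Fin 3) (h : k = i + 1) : dist (ExPt.y i) (ExPt.x k) = 1 := by
  apply dist_adj (by intro hc; exact ExPt.noConfusion hc)
  subst h; simp [ExPt.adj]

lemma dist_xy (i k : Fin 3) (h : k = i + 1) : dist (ExPt.x k) (ExPt.y i) = 1 := by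
  apply dist_adj (by intro hc; exact ExPt.noConfusion hc)
  subst h; simp [ExPt.adj]

lemma dist_uv (i : Fin 3) (j : ℕ) : dist (ExPt.u i j) (ExPt.v i j) = 1 := by
  apply dist_adj (by intro hc; exact ExPt.noConfusion hc)
  simp [ExPt.adj]

lemma dist_vu (i : Fin 3) (j : ℕ) : dist (ExPt.v i j) (ExPt.u i j) = 1 := by
  apply dist_adj (by intro hc; exact ExPt.noConfusion hc)
  simp [ExPt.adj]

lemma dist_u_left {i : Fin 3} {j : ℕ} {c : ExPt} (h1 : c ≠ ExPt.u i j)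
    (hx : c ≠ ExPt.x i) (hv : c ≠ ExPt.v i j) : dist (ExPt.u i j) c = 2 := by
  apply dist_nadj (fun hc => h1 hc.symm)
  rw [adj_u_iff]; rintro (rfl | rfl)
  · exact hx rfl
  · exact hv rfl

lemma dist_v_left {i : Fin 3} {j : ℕ} {c : ExPt} (h1 : c ≠ ExPt.v i j)
    (hy : c ≠ ExPt.y i) (hu : c ≠ ExPt.u i j) : dist (ExPt.v i j) c = 2 := by
  apply dist_nadj (fun hc => h1 hc.symm)
  rw [adj_v_iff]; rintro (rfl | rfl)
  · exact hy rfl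
  · exact hu rfl

lemma dist_comm' (a b : ExPt) : dist a b = dist b a := dist_comm a b

/-! ### Chains -/

noncomputable def Dsum (q : ℕ → Mt ExPt) (m : ℕ) : ℝ :=
  ∑ i ∈ range (m+1), dist (q i).1.1 (q i).1.2

noncomputable def Csum (q : ℕ → Mt ExPt) (m : ℕ) : ℝ :=
  ∑ i ∈ range m, dist (q i).1.1 (q (i+1)).1.2

noncomputable def Gp (q : ℕ → Mt ExPt) (m : ℕ) : ℝ := Dsum q m - Csum q m

def IsCh (A : Set (Mt ExPt)) (q : ℕ → Mt ExPt) (m : ℕ) : Prop := ∀ i ≤ m, q i ∈ A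

lemma diag_conv (q : ℕ → Mt ExPt) (m : ℕ) :
    ∑ i : Fin (m+1), dist (q i.val).1.1 (q i.val).1.2 = Dsum q m :=
  Fin.sum_univ_eq_sum_range (fun k => dist (q k).1.1 (q k).1.2) (m+1)

lemma fin_add_one_val (m : ℕ) (i : Fin (m+1)) :
    ((i+1 : Fin (m+1))).val = (i.val + 1) % (m+1) := by
  rw [Fin.add_def]; simp [Nat.add_mod]

lemma cross_conv (q : ℕ → Mt ExPt) (m : ℕ) :
    ∑ i : Fin (m+1), dist (q i.val).1.1 (q ((i+1 : Fin (m+1)).val)).1.2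
      = Csum q m + dist (q m).1.1 (q 0).1.2 := by
  have hcongr : ∑ i : Fin (m+1), dist (q i.val).1.1 (q ((i+1 : Fin (m+1)).val)).1.2
      = ∑ i : Fin (m+1), (fun k => dist (q k).1.1 (q ((k+1) % (m+1))).1.2) i.val :=
    Finset.sum_congr rfl (fun i _ => by rw [fin_add_one_val])
  rw [hcongr, Fin.sum_univ_eq_sum_range (fun k => dist (q k).1.1 (q ((k+1) % (m+1))).1.2) (m+1),
    Finset.sum_range_succ]
  congr 1
  · apply Finset.sum_congr rfl; intro i hi
    rw [Nat.mod_eq_of_lt (by have := Finset.mem_range.mp hi; omega)]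
  · rw [Nat.mod_self]

/-- Gap bound from cyclic monotonicity. -/
lemma gap_le {A : Set (Mt ExPt)} (hA : CyclMono A) {q : ℕ → Mt ExPt} {m : ℕ}
    (h : IsCh A q m) : Gp q m ≤ dist (q m).1.1 (q 0).1.2 := by
  have hp : ∀ i : Fin (m+1), (fun i : Fin (m+1) => q i.val) i ∈ A :=
    fun i => h i.val (by omega)
  have hcm := hA m (fun i : Fin (m+1) => q i.val) hp
  rw [diag_conv, cross_conv] at hcm
  unfold Gp
  linarith

lemma Dsum_split (q : ℕ → Mt ExPt) (k m' : ℕ) :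
    Dsum q (k+1+m') = Dsum q k + Dsum (fun i => q (k+1+i)) m' := by
  unfold Dsum
  rw [show k+1+m'+1 = (k+1) + (m'+1) by ring, Finset.sum_range_add]

lemma Csum_split (q : ℕ → Mt ExPt) (k m' : ℕ) :
    Csum q (k+1+m') = Csum q k + dist (q k).1.1 (q (k+1)).1.2
      + Csum (fun i => q (k+1+i)) m' := by
  unfold Csum
  rw [show k+1+m' = (k+1) + m' by ring, Finset.sum_range_add, Finset.sum_range_succ]
  congr 1

lemma Gp_split (q : ℕ → Mt ExPt) (k m' : ℕ) :
    Gp q (k+1+m') = Gp q k + Gp (fun i => q (k+1+i)) m'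
      - dist (q k).1.1 (q (k+1)).1.2 := by
  unfold Gp; rw [Dsum_split, Csum_split]; ring

lemma Gp_succ (q : ℕ → Mt ExPt) (k : ℕ) :
    Gp q (k+1) = Gp q k + dist (q (k+1)).1.1 (q (k+1)).1.2
      - dist (q k).1.1 (q (k+1)).1.2 := by
  unfold Gp Dsum Csum
  rw [Finset.sum_range_succ (fun i => dist (q i).1.1 (q i).1.2) (k+1),
    Finset.sum_range_succ (fun i => dist (q i).1.1 (q (i+1)).1.2) k]
  ring

lemma Gp_congr {q q' : ℕ → Mt ExPt} {m : ℕ} (h : ∀ i ≤ m, q i = q' i) :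
    Gp q m = Gp q' m := by
  unfold Gp Dsum Csum
  congr 1
  · apply Finset.sum_congr rfl; intro i hi
    rw [h i (by have := Finset.mem_range.mp hi; omega)]
  · apply Finset.sum_congr rfl; intro i hi
    have hi' := Finset.mem_range.mp hi
    rw [h i (by omega), h (i+1) (by omega)]

lemma Gp_int (q : ℕ → Mt ExPt) (m : ℕ) : ∃ k : ℤ, Gp q m = (k : ℝ) := by
  have key : ∀ (s : Finset ℕ) (f : ℕ → ℝ), (∀ i ∈ s, ∃ k : ℤ, f i = (k:ℝ)) →
      ∃ k : ℤ, ∑ i ∈ s, f i = (k : ℝ) := by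
    intro s f hf
    refine Finset.sum_induction f (fun x => ∃ k : ℤ, x = (k:ℝ)) ?_ ⟨0, by norm_num⟩ hf
    rintro a b ⟨ka, rfl⟩ ⟨kb, rfl⟩
    exact ⟨ka + kb, by push_cast; ring⟩
  obtain ⟨k1, h1⟩ := key (range (m+1)) _ (fun i _ => dist_int (q i).1.1 (q i).1.2)
  obtain ⟨k2, h2⟩ := key (range m) _ (fun i _ => dist_int (q i).1.1 (q (i+1)).1.2)
  exact ⟨k1 - k2, by unfold Gp Dsum Csum; rw [h1, h2]; push_cast; ring⟩

/-! ### Bad chains -/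

def Bd (A : Set (Mt ExPt)) (a b : ExPt) : Prop :=
  ∃ q m, IsCh A q m ∧ (q 0).1.2 = a ∧ (q m).1.1 = b ∧ 2 ≤ Gp q m

lemma no_adj_bd {A : Set (Mt ExPt)} (hA : CyclMono A) {a b a' b' : ExPt}
    (h1 : Bd A a b) (h2 : Bd A a' b') (hadj : dist b a' = 1) : False := by
  obtain ⟨q, m, hq, hqa, hqb, hg⟩ := h1
  obtain ⟨q', m', hq', hqa', hqb', hg'⟩ := h2
  set Q : ℕ → Mt ExPt := fun i => if i ≤ m then q i else q' (i - (m+1)) with hQ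
  have hval : ∀ i, Q (m+1+i) = q' i := by
    intro i; rw [hQ]; simp only []
    rw [if_neg (by omega)]
    congr 1; omega
  have hch : IsCh A Q (m+1+m') := by
    intro i hi
    rw [hQ]; simp only []
    by_cases h : i ≤ m
    · rw [if_pos h]; exact hq i h
    · rw [if_neg h]; exact hq' (i - (m+1)) (by omega)
  have e1 : Gp Q m = Gp q m := Gp_congr (fun i hi => by rw [hQ]; simp only [if_pos hi])
  have e2 : Gp (fun i => Q (m+1+i)) m' = Gp q' m' := Gp_congr (fun i hi => hval i)
  have hsplit := Gp_split Q m m'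
  have hQm : (Q m).1.1 = b := by rw [hQ]; simp only [if_pos le_rfl]; exact hqb
  have hQm1 : (Q (m+1)).1.2 = a' := by
    have := hval 0; rw [Nat.add_zero] at this; rw [this]; exact hqa'
  have hQend : (Q (m+1+m')).1.1 = b' := by rw [hval m']; exact hqb'
  have hQ0 : (Q 0).1.2 = a := by rw [hQ]; simp only [if_pos (Nat.zero_le m)]; exact hqa
  have hgap := gap_le hA hch
  rw [hQend, hQ0] at hgap
  rw [e1, e2, hQm, hQm1, hadj] at hsplit
  have hle2 : dist b' a ≤ 2 := dist_le_two' b' a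
  linarith

/-! ### Chain bound extension to inserted pair -/

lemma chain_bound {A : Set (Mt ExPt)} {w z : ExPt} {hwz : w ≠ z} (hd1 : dist w z = 1)
    (hcrit : ∀ q m, IsCh A q m → Gp q m + 1 ≤ dist w (q 0).1.2 + dist (q m).1.1 z) :
    ∀ m q, IsCh (insert (pr w z hwz) A) q m →
      Gp q m + 1 ≤ dist w (q 0).1.2 + dist (q m).1.1 z := by
  intro m
  induction m using Nat.strong_induction_on with
  | _ m IH =>
    intro q hq
    by_cases hall : ∀ i ≤ m, q i ∈ A
    · exact hcrit q m hall
    · push_neg at hall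
      obtain ⟨k, hk, hkA⟩ := hall
      have hke : q k = pr w z hwz := by
        rcases hq k hk with h | h
        · exact h
        · exact absurd h hkA
      have hk1 : (q k).1.1 = w := by rw [hke]; rfl
      have hk2 : (q k).1.2 = z := by rw [hke]; rfl
      rcases Nat.lt_or_ge k m with hkm | hkm
      · -- k < m : split at k
        obtain ⟨m', rfl⟩ : ∃ m', m = k + 1 + m' := ⟨m - k - 1, by omega⟩
        have hpre : Gp q k ≤ dist w (q 0).1.2 := by
          have hh := IH k (by omega) q (fun i hi => hq i (by omega))
          rw [hk1, hd1] at hh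
          linarith
        have hsuf := IH m' (by omega) (fun i => q (k+1+i))
          (fun i hi => hq (k+1+i) (by omega))
        simp only [Nat.add_zero] at hsuf
        have hsplit := Gp_split q k m'
        rw [hk1] at hsplit
        linarith
      · -- k = m
        have hkm' : k = m := le_antisymm hk hkm
        subst hkm'
        rcases Nat.eq_zero_or_pos k with rfl | hpos
        · have h0 : Gp q 0 = dist (q 0).1.1 (q 0).1.2 := by
            unfold Gp Dsum Csum
            rw [Finset.sum_range_one, Finset.range_zero, Finset.sum_empty]
            ring
          rw [h0, hk1, hk2, hd1]
        · obtain ⟨m'', rfl⟩ : ∃ m'', k = m'' + 1 := ⟨k-1, by omega⟩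
          have hIH := IH m'' (by omega) q (fun i hi => hq i (by omega))
          have hsplit := Gp_succ q m''
          rw [hk1, hk2, hd1] at hsplit
          rw [hk1, hd1]
          linarith

/-! ### Insertion theorem -/

open Fin.NatCast in
lemma insert_cm {A : Set (Mt ExPt)} (hA : CyclMono A) {w z : ExPt} (hwz : w ≠ z)
    (hd1 : dist w z = 1)
    (hcrit : ∀ q m, IsCh A q m → Gp q m + 1 ≤ dist w (q 0).1.2 + dist (q m).1.1 z) :
    CyclMono (insert (pr w z hwz) A) := by
  intro n p hp
  by_cases hall : ∀ i, p i ∈ A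
  · exact hA n p hall
  push_neg at hall
  obtain ⟨i0, hi0⟩ := hall
  have hi0e : p i0 = pr w z hwz := by
    rcases hp i0 with h | h
    · exact h
    · exact absurd h hi0
  rcases Nat.eq_zero_or_pos n with rfl | hn
  · apply le_of_eq
    apply Finset.sum_congr rfl
    intro i _
    rw [show i + 1 = i from Subsingleton.elim (α := Fin 1) _ _]
  obtain ⟨m, rfl⟩ : ∃ m, n = m + 1 := ⟨n-1, by omega⟩
  set c : Fin (m+1+1) := i0 + 1 with hc
  set p' : Fin (m+1+1) → Mt ExPt := fun i => p (i + c) with hp'def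
  have hrot1 : ∑ i : Fin (m+2), dist (p' i).1.1 (p' i).1.2
      = ∑ i : Fin (m+2), dist (p i).1.1 (p i).1.2 :=
    Equiv.sum_comp (Equiv.addRight c) (fun k => dist (p k).1.1 (p k).1.2)
  have hrot2 : ∑ i : Fin (m+2), dist (p' i).1.1 (p' (i+1)).1.2
      = ∑ i : Fin (m+2), dist (p i).1.1 (p (i+1)).1.2 := by
    have hstep : ∀ i : Fin (m+2),
        dist (p' i).1.1 (p' (i+1)).1.2
          = (fun k => dist (p k).1.1 (p (k+1)).1.2) (i + c) := by
      intro i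
      show dist (p (i + c)).1.1 (p (i + 1 + c)).1.2
        = dist (p (i + c)).1.1 (p (i + c + 1)).1.2
      have hidx : i + 1 + c = i + c + 1 := add_right_comm i 1 c
      rw [hidx]
    rw [Finset.sum_congr rfl (fun i _ => hstep i)]
    exact Equiv.sum_comp (Equiv.addRight c) (fun k => dist (p k).1.1 (p (k+1)).1.2)
  have hlast : p' (Fin.last (m+1)) = pr w z hwz := by
    have he : Fin.last (m+1) + c = i0 := by
      rw [hc, show Fin.last (m+1) + (i0 + 1) = (Fin.last (m+1) + 1) + i0 from (add_comm i0 1 ▸ add_assoc (Fin.last (m+1)) 1 i0).symm,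
        Fin.last_add_one, zero_add]
    show p (Fin.last (m+1) + c) = pr w z hwz
    rw [he]
    exact hi0e
  set q : ℕ → Mt ExPt := fun k => p' ((k : ℕ) : Fin (m+2)) with hqdef
  have hq : IsCh (insert (pr w z hwz) A) q m := fun i _ => hp _
  have hqm1 : q (m+1) = pr w z hwz := by
    show p' (((m+1 : ℕ) : Fin (m+2))) = pr w z hwz
    rw [Fin.natCast_eq_last]
    exact hlast
  have hqval : ∀ i : Fin (m+2), q i.val = p' i := by
    intro i
    show p' ((i.val : Fin (m+2))) = p' i
    rw [Fin.cast_val_eq_self]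
  have key := chain_bound hd1 hcrit m q hq
  have hdiag : ∑ i : Fin (m+2), dist (p' i).1.1 (p' i).1.2 = Dsum q m + 1 := by
    rw [Finset.sum_congr rfl (fun (i : Fin (m+2)) _ => by rw [← hqval i])]
    rw [diag_conv q (m+1)]
    unfold Dsum
    rw [Finset.sum_range_succ]
    rw [hqm1]
    show _ + dist w z = _
    rw [hd1]
  have hcross : ∑ i : Fin (m+2), dist (p' i).1.1 (p' (i+1)).1.2
      = Csum q m + dist (q m).1.1 z + dist w (q 0).1.2 := by
    rw [Finset.sum_congr rfl (fun (i : Fin (m+2)) _ => by rw [← hqval i, ← hqval (i+1)])]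
    rw [cross_conv q (m+1)]
    unfold Csum
    rw [Finset.sum_range_succ]
    rw [hqm1]
    show _ + dist (q m).1.1 z + dist w _ = _
    ring
  rw [← hrot1, ← hrot2, hdiag, hcross]
  have hgp : Gp q m = Dsum q m - Csum q m := rfl
  linarith

end Stmt19Aux

open Stmt19Aux

/-- Example 5.2: for a cyclically monotonic `A ⊆ M̃` with `π(A)` avoiding the
six points `u_i^j, v_i^j`, one can add a pair `(u,v)` in both orders keeping
cyclic monotonicity. -/
theorem stmt19 (j : ℕ) (A : Set (Mt ExPt)) (hA : CyclMono A)
    (hdisj : ∀ i : Fin 3, ExPt.u i j ∉ piA A ∧ ExPt.v i j ∉ piA A) :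
    ∃ (u v : ExPt) (huv : u ≠ v),
      CyclMono (insert (pr u v huv) A) ∧ CyclMono (insert (pr v u huv.symm) A) := by
  classical
  have hgood : ∃ i : Fin 3, ¬ Bd A (ExPt.x i) (ExPt.y i) ∧ ¬ Bd A (ExPt.y i) (ExPt.x i) := by
    by_contra hcon
    push_neg at hcon
    have hc' : ∀ i : Fin 3, Bd A (ExPt.x i) (ExPt.y i) ∨ Bd A (ExPt.y i) (ExPt.x i) := by
      intro i
      by_cases h : Bd A (ExPt.x i) (ExPt.y i)
      · exact Or.inl h
      · exact Or.inr (hcon i h)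
    have hL : ∀ i k : Fin 3, k = i + 1 → Bd A (ExPt.x i) (ExPt.y i) →
        Bd A (ExPt.x k) (ExPt.y k) → False :=
      fun i k hk h1 h2 => no_adj_bd hA h1 h2 (dist_yx i k hk)
    have hR : ∀ i k : Fin 3, k = i + 1 → Bd A (ExPt.y i) (ExPt.x i) →
        Bd A (ExPt.y k) (ExPt.x k) → False :=
      fun i k hk h1 h2 => no_adj_bd hA h2 h1 (dist_xy i k hk)
    rcases hc' 0 with h0 | h0 <;> rcases hc' 1 with h1 | h1 <;> rcases hc' 2 with h2 | h2
    · exact hL 0 1 (by decide) h0 h1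
    · exact hL 0 1 (by decide) h0 h1
    · exact hL 2 0 (by decide) h2 h0
    · exact hR 1 2 (by decide) h1 h2
    · exact hL 1 2 (by decide) h1 h2
    · exact hR 2 0 (by decide) h2 h0
    · exact hR 0 1 (by decide) h0 h1
    · exact hR 0 1 (by decide) h0 h1
  obtain ⟨i, hbd1, hbd2⟩ := hgood
  have hne_pts : ∀ t ∈ piA A, t ≠ ExPt.u i j ∧ t ≠ ExPt.v i j := by
    intro t ht
    constructor
    · rintro rfl; exact (hdisj i).1 ht
    · rintro rfl; exact (hdisj i).2 ht
  refine ⟨ExPt.u i j, ExPt.v i j, fun h => ExPt.noConfusion h, ?_, ?_⟩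
  · apply insert_cm hA _ (dist_uv i j)
    intro q m hq
    have ha : (q 0).1.2 ∈ piA A := ⟨q 0, hq 0 (Nat.zero_le m), Or.inr rfl⟩
    have hb : (q m).1.1 ∈ piA A := ⟨q m, hq m le_rfl, Or.inl rfl⟩
    have hgap := gap_le hA hq
    have hble : dist (q m).1.1 (q 0).1.2 ≤ 2 := dist_le_two' _ _
    obtain ⟨hau, hav⟩ := hne_pts _ ha
    obtain ⟨hbu, hbv⟩ := hne_pts _ hb
    by_cases hxa : (q 0).1.2 = ExPt.x i
    · by_cases hyb : (q m).1.1 = ExPt.y i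
      · have hg2 : ¬ (2 ≤ Gp q m) := fun hg => hbd1 ⟨q, m, hq, hxa, hyb, hg⟩
        obtain ⟨kk, hkk⟩ := Gp_int q m
        rw [hxa, hyb]
        rw [show dist (ExPt.u i j) (ExPt.x i) = 1 from
          dist_adj (fun h => ExPt.noConfusion h) (by simp [ExPt.adj])]
        rw [show dist (ExPt.y i) (ExPt.v i j) = 1 from
          dist_adj (fun h => ExPt.noConfusion h) (by simp [ExPt.adj])]
        rw [hkk] at hg2 ⊢
        have h2' : (kk : ℝ) < 2 := lt_of_not_ge hg2
        have hk1 : kk ≤ 1 := by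
          have : kk < 2 := by exact_mod_cast h2'
          omega
        have : (kk : ℝ) ≤ 1 := by exact_mod_cast hk1
        linarith
      · have hbv2 : dist (q m).1.1 (ExPt.v i j) = 2 := by
          rw [dist_comm']
          exact dist_v_left hbv hyb hbu
        have hwa : 1 ≤ dist (ExPt.u i j) (q 0).1.2 := one_le_dist' (Ne.symm hau)
        linarith
    · have hwa : dist (ExPt.u i j) (q 0).1.2 = 2 := dist_u_left hau hxa hav
      have hbz : 1 ≤ dist (q m).1.1 (ExPt.v i j) := one_le_dist' hbv
      linarith
  · apply insert_cm hA _ (dist_vu i j)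
    intro q m hq
    have ha : (q 0).1.2 ∈ piA A := ⟨q 0, hq 0 (Nat.zero_le m), Or.inr rfl⟩
    have hb : (q m).1.1 ∈ piA A := ⟨q m, hq m le_rfl, Or.inl rfl⟩
    have hgap := gap_le hA hq
    have hble : dist (q m).1.1 (q 0).1.2 ≤ 2 := dist_le_two' _ _
    obtain ⟨hau, hav⟩ := hne_pts _ ha
    obtain ⟨hbu, hbv⟩ := hne_pts _ hb
    by_cases hya : (q 0).1.2 = ExPt.y i
    · by_cases hxb : (q m).1.1 = ExPt.x i
      · have hg2 : ¬ (2 ≤ Gp q m) := fun hg => hbd2 ⟨q, m, hq, hya, hxb, hg⟩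
        obtain ⟨kk, hkk⟩ := Gp_int q m
        rw [hya, hxb]
        rw [show dist (ExPt.v i j) (ExPt.y i) = 1 from
          dist_adj (fun h => ExPt.noConfusion h) (by simp [ExPt.adj])]
        rw [show dist (ExPt.x i) (ExPt.u i j) = 1 from
          dist_adj (fun h => ExPt.noConfusion h) (by simp [ExPt.adj])]
        rw [hkk] at hg2 ⊢
        have h2' : (kk : ℝ) < 2 := lt_of_not_ge hg2
        have hk1 : kk ≤ 1 := by
          have : kk < 2 := by exact_mod_cast h2'
          omega
        have : (kk : ℝ) ≤ 1 := by exact_mod_cast hk1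
        linarith
      · have hbu2 : dist (q m).1.1 (ExPt.u i j) = 2 := by
          rw [dist_comm']
          exact dist_u_left hbu hxb hbv
        have hwa : 1 ≤ dist (ExPt.v i j) (q 0).1.2 := one_le_dist' (Ne.symm hav)
        linarith
    · have hwa : dist (ExPt.v i j) (q 0).1.2 = 2 := dist_v_left hav hya hau
      have hbz : 1 ≤ dist (q m).1.1 (ExPt.u i j) := one_le_dist' hbu
      linarith
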